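/- Let 0 < ε < 1 and d ≥ 2, and let M be the noisy projective measurement in dimension d. Then for every unit vector φ ∈ ℂ^d, ∑_x ⟪φ, √(M x)·φ⟫² ≥ (1/d)·(tr √(M 0))² = (1/d²)·(√(d−(d−1)ε) + (d−1)√ε)², and the inequality is strict whenever there exists x with |φ_x|² ≠ 1/d. -/

import Mathlib

open Matrix ComplexOrder

noncomputable section

/-- `K` is a valid decomposition of the POVM `M`. -/
def IsDecomp {m d : ℕ} (M : Fin m → Matrix (Fin d) (Fin d) ℂ)
    (K : Fin m → Fin m → Matrix (Fin d) (Fin d) ℂ) : Prop :=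
  (∀ x j, (K x j).PosSemidef) ∧
  (∀ j, (d : ℂ) • ∑ x, K x j = (∑ x, (K x j).trace) • (1 : Matrix (Fin d) (Fin d) ℂ)) ∧
  (∀ x, ∑ j, K x j = M x)

/-- Eve's objective for the decomposition `K` and the state `φ`:
`∑_j ⟪φ, (K j j) φ⟫`. -/
def objective {m d : ℕ} (K : Fin m → Fin m → Matrix (Fin d) (Fin d) ℂ)
    (φ : Fin d → ℂ) : ℝ :=
  ∑ j, (star φ ⬝ᵥ (K j j).mulVec φ).re

/-- The noisy projective measurement in dimension `d` with noise parameter `ε`. -/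
def noisyM (d : ℕ) (ε : ℝ) : Fin d → Matrix (Fin d) (Fin d) ℂ :=
  fun x => ((1 - ε : ℝ) : ℂ) • Matrix.single x x 1 + ((ε / d : ℝ) : ℂ) • 1

/-- The positive semidefinite square root of `noisyM d ε x`. -/
def sqrtNoisyM (d : ℕ) (ε : ℝ) : Fin d → Matrix (Fin d) (Fin d) ℂ :=
  fun x => ((Real.sqrt (((d : ℝ) - ((d : ℝ) - 1) * ε) / d)) : ℂ) • Matrix.single x x 1
    + ((Real.sqrt (ε / d)) : ℂ) • (1 - Matrix.single x x 1)

/-- **Lemma 3** (bound): for every unit state `φ`,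
`∑_x ⟪φ, √(M x) φ⟫² ≥ (1/d)(tr √M₁)² = (1/d²)(√(d−(d−1)ε) + (d−1)√ε)²`, with strict
inequality whenever `φ` is not unbiased to the measurement basis. -/
theorem noisy_projective_lower_bound
    {d : ℕ} (hd : 2 ≤ d) (ε : ℝ) (hε0 : 0 < ε) (hε1 : ε < 1)
    (φ : Fin d → ℂ) (hφ : star φ ⬝ᵥ φ = 1) :
    (1 / (d : ℝ) ^ 2) *
        (Real.sqrt ((d : ℝ) - ((d : ℝ) - 1) * ε) + ((d : ℝ) - 1) * Real.sqrt ε) ^ 2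
      ≤ ∑ x, ((star φ ⬝ᵥ (sqrtNoisyM d ε x).mulVec φ).re) ^ 2 ∧
    ((∃ x, ‖φ x‖ ^ 2 ≠ 1 / (d : ℝ)) →
      (1 / (d : ℝ) ^ 2) *
          (Real.sqrt ((d : ℝ) - ((d : ℝ) - 1) * ε) + ((d : ℝ) - 1) * Real.sqrt ε) ^ 2
        < ∑ x, ((star φ ⬝ᵥ (sqrtNoisyM d ε x).mulVec φ).re) ^ 2) := by
  have hd0 : (0:ℝ) < d := by
    have : (2:ℝ) ≤ d := by exact_mod_cast hd
    linarith
  have hd0' : (d:ℝ) ≠ 0 := ne_of_gt hd0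
  have hnum : (0:ℝ) ≤ (d:ℝ) - ((d:ℝ) - 1) * ε := by nlinarith
  set A := Real.sqrt ((d : ℝ) - ((d : ℝ) - 1) * ε) with hA
  set B := Real.sqrt ε with hB
  set a := Real.sqrt (((d : ℝ) - ((d : ℝ) - 1) * ε) / d) with ha
  set b := Real.sqrt (ε / d) with hb
  set c := (a + ((d:ℝ) - 1) * b) / d with hc
  -- value of each entry
  have key : ∀ x : Fin d, star φ ⬝ᵥ ((Matrix.single x x (1:ℂ)).mulVec φ)
      = ((‖φ x‖^2 : ℝ) : ℂ) := by
    intro x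
    simp only [Matrix.mulVec, dotProduct, Matrix.single, Matrix.of_apply, Pi.star_apply,
      Finset.mul_sum, ite_mul, mul_ite, zero_mul, mul_zero, one_mul]
    rw [Finset.sum_eq_single x]
    · rw [Finset.sum_eq_single x]
      · rw [show star (φ x) = (starRingEnd ℂ) (φ x) from rfl,
          ← Complex.normSq_eq_conj_mul_self, Complex.normSq_eq_norm_sq]
        push_cast; simp
      · intro b _ hb; simp [Ne.symm hb]
      · simp
    · intro b _ hb; rw [Finset.sum_eq_zero]; intro j _; simp [Ne.symm hb]
    · simp
  have hval : ∀ x : Fin d, (star φ ⬝ᵥ (sqrtNoisyM d ε x).mulVec φ).re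
      = b + (a - b) * ‖φ x‖^2 := by
    intro x
    have : star φ ⬝ᵥ (sqrtNoisyM d ε x).mulVec φ
        = ((b + (a - b) * ‖φ x‖^2 : ℝ) : ℂ) := by
      simp only [sqrtNoisyM, Matrix.add_mulVec, Matrix.smul_mulVec, Matrix.sub_mulVec,
        Matrix.one_mulVec, dotProduct_add, dotProduct_smul, dotProduct_sub, key x, hφ,
        smul_eq_mul, ← ha, ← hb]
      push_cast; ring
    rw [this, Complex.ofReal_re]
  have hsum : ∑ x, ‖φ x‖^2 = (1:ℝ) := by
    have h2 : ((∑ x, ‖φ x‖^2 : ℝ) : ℂ) = 1 := by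
      rw [← hφ]
      push_cast
      simp only [dotProduct, Pi.star_apply]
      refine Finset.sum_congr rfl fun i _ => ?_
      rw [show star (φ i) = (starRingEnd ℂ) (φ i) from rfl,
        ← Complex.normSq_eq_conj_mul_self, Complex.normSq_eq_norm_sq]
      push_cast
      simp
    exact_mod_cast h2
  -- the sum identity
  have hsum2 : ∑ x, ((star φ ⬝ᵥ (sqrtNoisyM d ε x).mulVec φ).re)^2
      = (d:ℝ) * c^2 + (a - b)^2 * ∑ x, (‖φ x‖^2 - 1/(d:ℝ))^2 := by
    have e1 : ∀ x : Fin d, ((star φ ⬝ᵥ (sqrtNoisyM d ε x).mulVec φ).re)^2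
        = c^2 + (2*c*(a-b)) * (‖φ x‖^2 - 1/(d:ℝ)) + (a-b)^2 * (‖φ x‖^2 - 1/(d:ℝ))^2 := by
      intro x
      rw [hval x, hc]
      field_simp [hc]
      ring
    rw [Finset.sum_congr rfl (fun x _ => e1 x), Finset.sum_add_distrib, Finset.sum_add_distrib,
      Finset.sum_const, Finset.card_univ, Fintype.card_fin, nsmul_eq_mul,
      ← Finset.mul_sum, ← Finset.mul_sum, Finset.sum_sub_distrib, hsum,
      Finset.sum_const, Finset.card_univ, Fintype.card_fin, nsmul_eq_mul]
    have : (d:ℝ) * (1/(d:ℝ)) = 1 := by field_simp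
    rw [this]; ring
  -- identify the constant
  have hsd : Real.sqrt d ≠ 0 := by positivity
  have hsd2 : (Real.sqrt d)^2 = (d:ℝ) := Real.sq_sqrt (le_of_lt hd0)
  have haA : a = A / Real.sqrt d := by rw [ha, hA, Real.sqrt_div hnum]
  have hbB : b = B / Real.sqrt d := by rw [hb, hB, Real.sqrt_div (le_of_lt hε0)]
  have hT : (d:ℝ) * c^2 = (1 / (d : ℝ) ^ 2) * (A + ((d:ℝ) - 1) * B)^2 := by
    rw [hc, haA, hbB]
    field_simp
    rw [hsd2]
  have hS0 : (0:ℝ) ≤ ∑ x, (‖φ x‖^2 - 1/(d:ℝ))^2 :=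
    Finset.sum_nonneg fun x _ => sq_nonneg _
  have hba : b < a := by
    rw [ha, hb]
    apply Real.sqrt_lt_sqrt (by positivity)
    rw [div_lt_div_iff₀ hd0 hd0]
    nlinarith [mul_pos (mul_pos hd0 hd0) (sub_pos.mpr hε1)]
  constructor
  · rw [hsum2, ← hT]
    have := mul_nonneg (sq_nonneg (a - b)) hS0
    linarith
  · rintro ⟨x, hx⟩
    have hSpos : (0:ℝ) < ∑ y, (‖φ y‖^2 - 1/(d:ℝ))^2 := by
      refine Finset.sum_pos' (fun y _ => sq_nonneg _) ⟨x, Finset.mem_univ x, ?_⟩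
      have h := sub_ne_zero.mpr hx
      positivity
    rw [hsum2, ← hT]
    have h1 : (0:ℝ) < (a - b)^2 := pow_pos (sub_pos.mpr hba) 2
    linarith [mul_pos h1 hSpos]
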